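/- For every integer n ≥ 2 and every element p of R_n = ℚ[x, y₁, …, yₙ]/(x·y₁, …, x·yₙ), p is a non-zero-divisor of R_n if and only if both πₓ(p) ≠ 0 and π_y(p) ≠ 0. -/

import Mathlib

open MvPolynomial

/-- The ideal `(x·y₁, …, x·yₙ)` in `ℚ[x, y₁, …, yₙ]`, where `x = X 0` and
`yᵢ = X i.succ` in `MvPolynomial (Fin (n+1)) ℚ`. -/
noncomputable def relIdeal (n : ℕ) : Ideal (MvPolynomial (Fin (n + 1)) ℚ) :=
  Ideal.span (Set.range fun i : Fin n => X 0 * X i.succ)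

/-- The ring `R_n = ℚ[x, y₁, …, yₙ]/(x·y₁, …, x·yₙ)`. -/
abbrev Rring (n : ℕ) := MvPolynomial (Fin (n + 1)) ℚ ⧸ relIdeal n

/-- The assignment `x ↦ x`, `yᵢ ↦ 0`. -/
noncomputable def pxVals (n : ℕ) : Fin (n + 1) → Polynomial ℚ :=
  Fin.cases Polynomial.X fun _ => 0

/-- The assignment `x ↦ 0`, `yᵢ ↦ yᵢ`. -/
noncomputable def pyVals (n : ℕ) : Fin (n + 1) → MvPolynomial (Fin n) ℚ :=
  Fin.cases 0 fun j => X j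

/-- The ℚ-algebra homomorphism `πₓ : R_n → ℚ[x]`, `x̄ ↦ x`, `ȳᵢ ↦ 0`. -/
noncomputable def piX (n : ℕ) : Rring n →ₐ[ℚ] Polynomial ℚ :=
  Ideal.Quotient.liftₐ (relIdeal n) (aeval (pxVals n))
    (by
      intro a ha
      have h : relIdeal n ≤ RingHom.ker (aeval (R := ℚ) (pxVals n)) := by
        rw [relIdeal, Ideal.span_le]
        rintro _ ⟨i, rfl⟩
        simp [RingHom.mem_ker, pxVals]
      exact RingHom.mem_ker.mp (h ha))

/-- The ℚ-algebra homomorphism `π_y : R_n → ℚ[y₁, …, yₙ]`, `x̄ ↦ 0`, `ȳᵢ ↦ yᵢ`. -/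
noncomputable def piY (n : ℕ) : Rring n →ₐ[ℚ] MvPolynomial (Fin n) ℚ :=
  Ideal.Quotient.liftₐ (relIdeal n) (aeval (pyVals n))
    (by
      intro a ha
      have h : relIdeal n ≤ RingHom.ker (aeval (R := ℚ) (pyVals n)) := by
        rw [relIdeal, Ideal.span_le]
        rintro _ ⟨i, rfl⟩
        simp [RingHom.mem_ker, pyVals]
      exact RingHom.mem_ker.mp (h ha))

lemma sub_add_single (n : ℕ) (d : Fin (n+1) →₀ ℕ) (i : Fin n)
    (h0 : d 0 ≠ 0) (hi : d i.succ ≠ 0) :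
    d - (Finsupp.single 0 1 + Finsupp.single i.succ 1)
      + (Finsupp.single 0 1 + Finsupp.single i.succ 1) = d := by
  ext k
  simp only [Finsupp.coe_add, Finsupp.coe_tsub, Pi.add_apply, Pi.sub_apply,
    Finsupp.single_apply]
  rcases eq_or_ne (0 : Fin (n+1)) k with rfl | hk0
  · rw [if_pos rfl, if_neg (Fin.succ_ne_zero i)]
    omega
  · rcases eq_or_ne (i.succ : Fin (n+1)) k with rfl | hk1
    · rw [if_pos rfl, if_neg hk0]
      omega
    · simp [if_neg hk0, if_neg hk1]

lemma mono_mem (n : ℕ) (d : Fin (n+1) →₀ ℕ) (a : ℚ) (i : Fin n)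
    (h0 : d 0 ≠ 0) (hi : d i.succ ≠ 0) : monomial d a ∈ relIdeal n := by
  have key : monomial d a =
      monomial (d - (Finsupp.single 0 1 + Finsupp.single i.succ 1)) a * (X 0 * X i.succ) := by
    rw [X, X, monomial_mul, one_mul, monomial_mul, mul_one, sub_add_single n d i h0 hi]
  rw [key]
  exact Ideal.mul_mem_left _ _ (Ideal.subset_span ⟨i, rfl⟩)

lemma aeval_monomial_self {n : ℕ}
    (vals : Fin (n+1) → MvPolynomial (Fin (n+1)) ℚ) (d : Fin (n+1) →₀ ℕ) (a : ℚ)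
    (h : ∀ k ∈ d.support, vals k = X k) :
    aeval vals (monomial d a) = monomial d a := by
  rw [aeval_monomial, monomial_eq]
  congr 1
  exact Finsupp.prod_congr fun k hk => by rw [h k hk]

lemma aeval_monomial_zero' {n : ℕ} {S : Type*} [CommRing S] [Algebra ℚ S] [NoZeroDivisors S]
    (vals : Fin (n+1) → S) (d : Fin (n+1) →₀ ℕ) (a : ℚ) (k : Fin (n+1))
    (hk : d k ≠ 0) (h : vals k = 0) :
    aeval vals (monomial d a) = 0 := by
  rw [aeval_monomial]
  have : (d.prod fun i e => vals i ^ e) = 0 := by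
    apply Finset.prod_eq_zero (Finsupp.mem_support_iff.mpr hk)
    show vals k ^ d k = 0
    rw [h, zero_pow hk]
  rw [this, mul_zero]

/-- `x ↦ x`, `yᵢ ↦ 0` as an endomorphism. -/
noncomputable def sx (n : ℕ) : MvPolynomial (Fin (n+1)) ℚ →ₐ[ℚ] MvPolynomial (Fin (n+1)) ℚ :=
  aeval (Fin.cases (X 0) fun _ => 0)

/-- `x ↦ 0`, `yᵢ ↦ yᵢ` as an endomorphism. -/
noncomputable def sy (n : ℕ) : MvPolynomial (Fin (n+1)) ℚ →ₐ[ℚ] MvPolynomial (Fin (n+1)) ℚ :=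
  aeval (Fin.cases 0 fun j => X j.succ)

lemma sx_monomial_pure {n : ℕ} (d : Fin (n+1) →₀ ℕ) (a : ℚ)
    (h : ∀ i : Fin n, d i.succ = 0) : sx n (monomial d a) = monomial d a := by
  apply aeval_monomial_self
  intro k hk
  rcases Fin.eq_zero_or_eq_succ k with rfl | ⟨j, rfl⟩
  · simp
  · exact absurd (h j) (Finsupp.mem_support_iff.mp hk)

lemma sx_monomial_zero {n : ℕ} (d : Fin (n+1) →₀ ℕ) (a : ℚ) (i : Fin n)
    (hi : d i.succ ≠ 0) : sx n (monomial d a) = 0 :=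
  aeval_monomial_zero' _ d a i.succ hi (by simp)

lemma sy_monomial_pure {n : ℕ} (d : Fin (n+1) →₀ ℕ) (a : ℚ)
    (h : d 0 = 0) : sy n (monomial d a) = monomial d a := by
  apply aeval_monomial_self
  intro k hk
  rcases Fin.eq_zero_or_eq_succ k with rfl | ⟨j, rfl⟩
  · exact absurd h (Finsupp.mem_support_iff.mp hk)
  · simp [sy]

lemma sy_monomial_zero {n : ℕ} (d : Fin (n+1) →₀ ℕ) (a : ℚ)
    (h0 : d 0 ≠ 0) : sy n (monomial d a) = 0 :=
  aeval_monomial_zero' _ d a 0 h0 (by simp)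

lemma L_mem (n : ℕ) (q : MvPolynomial (Fin (n+1)) ℚ) :
    q - sx n q - sy n q + C (constantCoeff q) ∈ relIdeal n := by
  induction q using MvPolynomial.induction_on' with
  | monomial d a =>
    by_cases hpure : ∀ i : Fin n, d i.succ = 0
    · by_cases hd0 : d 0 = 0
      · have hd : d = 0 := by
          ext k
          rcases Fin.eq_zero_or_eq_succ k with rfl | ⟨j, rfl⟩
          · exact hd0
          · exact hpure j
        subst hd
        simp [sx_monomial_pure 0 a fun _ => rfl, sy_monomial_pure 0 a rfl]
      · rw [sx_monomial_pure d a hpure, sy_monomial_zero d a hd0,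
          constantCoeff_monomial, if_neg (by rintro rfl; exact hd0 rfl)]
        simp
    · push_neg at hpure
      obtain ⟨i, hi⟩ := hpure
      have hdne : d ≠ 0 := by rintro rfl; exact hi rfl
      by_cases hd0 : d 0 = 0
      · rw [sx_monomial_zero d a i hi, sy_monomial_pure d a hd0,
          constantCoeff_monomial, if_neg hdne]
        simp
      · rw [sx_monomial_zero d a i hi, sy_monomial_zero d a hd0,
          constantCoeff_monomial, if_neg hdne]
        simpa using mono_mem n d a i hd0 hi
  | add p q hp hq =>
    have : (p + q) - sx n (p + q) - sy n (p + q) + C (constantCoeff (p + q))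
        = (p - sx n p - sy n p + C (constantCoeff p))
          + (q - sx n q - sy n q + C (constantCoeff q)) := by
      simp only [map_add]
      ring
    rw [this]
    exact Ideal.add_mem _ hp hq

lemma constantCoeff_sx (n : ℕ) (q : MvPolynomial (Fin (n+1)) ℚ) :
    constantCoeff (sx n q) = constantCoeff q := by
  have : (constantCoeff (σ := Fin (n+1)) (R := ℚ)).comp (sx n).toRingHom
      = constantCoeff := by
    apply MvPolynomial.ringHom_ext
    · intro a; simp [sx]
    · intro i
      rcases Fin.eq_zero_or_eq_succ i with rfl | ⟨j, rfl⟩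
      · simp [sx]
      · simp [sx]
  exact RingHom.congr_fun this q

lemma constantCoeff_sy (n : ℕ) (q : MvPolynomial (Fin (n+1)) ℚ) :
    constantCoeff (sy n q) = constantCoeff q := by
  have : (constantCoeff (σ := Fin (n+1)) (R := ℚ)).comp (sy n).toRingHom
      = constantCoeff := by
    apply MvPolynomial.ringHom_ext
    · intro a; simp [sy]
    · intro i
      rcases Fin.eq_zero_or_eq_succ i with rfl | ⟨j, rfl⟩
      · simp [sy]
      · simp [sy]
  exact RingHom.congr_fun this q

lemma mem_of_sx_sy_eq_zero {n : ℕ} {q : MvPolynomial (Fin (n+1)) ℚ}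
    (hsx : sx n q = 0) (hsy : sy n q = 0) : q ∈ relIdeal n := by
  have hc : constantCoeff q = 0 := by rw [← constantCoeff_sx n q, hsx, map_zero]
  have := L_mem n q
  rwa [hsx, hsy, hc, map_zero, sub_zero, sub_zero, add_zero] at this

lemma xmul_sy_mem (n : ℕ) (q : MvPolynomial (Fin (n+1)) ℚ) :
    X 0 * (sy n q - C (constantCoeff q)) ∈ relIdeal n := by
  induction q using MvPolynomial.induction_on' with
  | monomial d a =>
    by_cases hd0 : d 0 = 0
    · by_cases hd : d = 0
      · subst hd
        simp [sy_monomial_pure 0 a rfl]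
      · obtain ⟨k, hk⟩ := Finsupp.ne_iff.mp hd
        have hk' : k ≠ 0 := by rintro rfl; exact hk (by simp [hd0])
        obtain ⟨j, rfl⟩ := (Fin.eq_zero_or_eq_succ k).resolve_left hk'
        have hj : d j.succ ≠ 0 := by simpa using hk
        rw [sy_monomial_pure d a hd0, constantCoeff_monomial, if_neg hd,
          map_zero, sub_zero, X, monomial_mul, one_mul]
        apply mono_mem n _ a j
        · simp [Finsupp.single_apply, Fin.succ_ne_zero]
        · simp [Finsupp.single_apply, (Fin.succ_ne_zero j).symm, hj,
            (Fin.succ_ne_zero j)]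
    · rw [sy_monomial_zero d a hd0, constantCoeff_monomial,
        if_neg (by rintro rfl; exact hd0 rfl)]
      simp
  | add p q hp hq =>
    have : X 0 * (sy n (p + q) - C (constantCoeff (p + q)))
        = X 0 * (sy n p - C (constantCoeff p)) + X 0 * (sy n q - C (constantCoeff q)) := by
      simp only [map_add]
      ring
    rw [this]
    exact Ideal.add_mem _ hp hq

lemma ymul_sx_mem (n : ℕ) (i0 : Fin n) (q : MvPolynomial (Fin (n+1)) ℚ) :
    X i0.succ * (sx n q - C (constantCoeff q)) ∈ relIdeal n := by
  induction q using MvPolynomial.induction_on' with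
  | monomial d a =>
    by_cases hpure : ∀ i : Fin n, d i.succ = 0
    · by_cases hd : d = 0
      · subst hd
        simp [sx_monomial_pure 0 a fun _ => rfl]
      · have hd0 : d 0 ≠ 0 := by
          intro h0
          apply hd
          ext k
          rcases Fin.eq_zero_or_eq_succ k with rfl | ⟨j, rfl⟩
          · exact h0
          · exact hpure j
        rw [sx_monomial_pure d a hpure, constantCoeff_monomial, if_neg hd,
          map_zero, sub_zero, X, monomial_mul, one_mul]
        apply mono_mem n _ a i0
        · simp [Finsupp.single_apply, (Fin.succ_ne_zero i0), hd0]
        · simp [Finsupp.single_apply]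
    · push_neg at hpure
      obtain ⟨i, hi⟩ := hpure
      rw [sx_monomial_zero d a i hi, constantCoeff_monomial,
        if_neg (by rintro rfl; exact hi rfl)]
      simp
  | add p q hp hq =>
    have : X i0.succ * (sx n (p + q) - C (constantCoeff (p + q)))
        = X i0.succ * (sx n p - C (constantCoeff p))
          + X i0.succ * (sx n q - C (constantCoeff q)) := by
      simp only [map_add]
      ring
    rw [this]
    exact Ideal.add_mem _ hp hq


lemma sx_eq (n : ℕ) (q : MvPolynomial (Fin (n+1)) ℚ) :
    sx n q = Polynomial.aeval (X 0 : MvPolynomial (Fin (n+1)) ℚ) (aeval (pxVals n) q) := by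
  have : sx n = (Polynomial.aeval (X 0 : MvPolynomial (Fin (n+1)) ℚ)).comp
      (aeval (pxVals n)) := by
    apply MvPolynomial.algHom_ext
    intro i
    rcases Fin.eq_zero_or_eq_succ i with rfl | ⟨j, rfl⟩
    · simp [sx, pxVals]
    · simp [sx, pxVals]
  rw [this]
  rfl

lemma sy_eq (n : ℕ) (q : MvPolynomial (Fin (n+1)) ℚ) :
    sy n q = aeval (fun j : Fin n => (X j.succ : MvPolynomial (Fin (n+1)) ℚ))
      (aeval (pyVals n) q) := by
  have : sy n = (aeval (fun j : Fin n => (X j.succ : MvPolynomial (Fin (n+1)) ℚ))).comp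
      (aeval (pyVals n)) := by
    apply MvPolynomial.algHom_ext
    intro i
    rcases Fin.eq_zero_or_eq_succ i with rfl | ⟨j, rfl⟩
    · simp [sy, pyVals]
    · simp [sy, pyVals]
  rw [this]
  rfl

lemma piX_mk (n : ℕ) (q : MvPolynomial (Fin (n+1)) ℚ) :
    piX n (Ideal.Quotient.mk (relIdeal n) q) = aeval (pxVals n) q := by
  simp [piX, Ideal.Quotient.liftₐ_apply, Ideal.Quotient.lift_mk]
  rfl

lemma piY_mk (n : ℕ) (q : MvPolynomial (Fin (n+1)) ℚ) :
    piY n (Ideal.Quotient.mk (relIdeal n) q) = aeval (pyVals n) q := by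
  simp [piY, Ideal.Quotient.liftₐ_apply, Ideal.Quotient.lift_mk]
  rfl


/-- For every integer `n ≥ 2` and every `p ∈ R_n`, `p` is a non-zero-divisor of `R_n`
if and only if `πₓ(p) ≠ 0` and `π_y(p) ≠ 0`. -/
theorem mem_nonZeroDivisors_iff_proj_ne_zero (n : ℕ) (hn : 2 ≤ n) (p : Rring n) :
    p ∈ nonZeroDivisors (Rring n) ↔ piX n p ≠ 0 ∧ piY n p ≠ 0 := by
  have i0 : Fin n := ⟨0, lt_of_lt_of_le two_pos hn⟩
  rw [mem_nonZeroDivisors_iff_right]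
  obtain ⟨q, rfl⟩ := Ideal.Quotient.mk_surjective p
  constructor
  · intro hp
    constructor
    · intro hx
      have hqx : aeval (pxVals n) q = 0 := by rwa [piX_mk] at hx
      have hsx : sx n q = 0 := by rw [sx_eq, hqx, map_zero]
      have hc : constantCoeff q = 0 := by rw [← constantCoeff_sx n q, hsx, map_zero]
      have h1 := xmul_sy_mem n q
      have h2 := L_mem n q
      rw [hsx, hc, map_zero, sub_zero, add_zero] at h2
      rw [hc, map_zero, sub_zero] at h1
      have hmem : X 0 * q ∈ relIdeal n := by
        have hXq : X 0 * q = X 0 * (q - sy n q) + X 0 * sy n q := by ring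
        rw [hXq]
        exact Ideal.add_mem _ (Ideal.mul_mem_left _ _ h2) h1
      have hzero : Ideal.Quotient.mk (relIdeal n) (X 0)
          * Ideal.Quotient.mk (relIdeal n) q = 0 := by
        rw [← map_mul, Ideal.Quotient.eq_zero_iff_mem]
        exact hmem
      have hX0 := hp _ hzero
      have : piX n (Ideal.Quotient.mk (relIdeal n) (X 0)) = Polynomial.X := by
        rw [piX_mk]
        simp [pxVals]
      rw [hX0, map_zero] at this
      exact Polynomial.X_ne_zero this.symm
    · intro hy
      have hqy : aeval (pyVals n) q = 0 := by rwa [piY_mk] at hy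
      have hsy : sy n q = 0 := by rw [sy_eq, hqy, map_zero]
      have hc : constantCoeff q = 0 := by rw [← constantCoeff_sy n q, hsy, map_zero]
      have h1 := ymul_sx_mem n i0 q
      have h2 := L_mem n q
      rw [hsy, hc, map_zero, sub_zero, add_zero] at h2
      rw [hc, map_zero, sub_zero] at h1
      have h2' : q - sx n q ∈ relIdeal n := h2
      have hmem : X i0.succ * q ∈ relIdeal n := by
        have hXq : X i0.succ * q = X i0.succ * (q - sx n q) + X i0.succ * sx n q := by ring
        rw [hXq]
        exact Ideal.add_mem _ (Ideal.mul_mem_left _ _ h2') h1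
      have hzero : Ideal.Quotient.mk (relIdeal n) (X i0.succ)
          * Ideal.Quotient.mk (relIdeal n) q = 0 := by
        rw [← map_mul, Ideal.Quotient.eq_zero_iff_mem]
        exact hmem
      have hX0 := hp _ hzero
      have : piY n (Ideal.Quotient.mk (relIdeal n) (X i0.succ)) = X i0 := by
        rw [piY_mk]
        simp [pyVals]
      rw [hX0, map_zero] at this
      exact MvPolynomial.X_ne_zero i0 this.symm
  · rintro ⟨hx, hy⟩ r hr
    obtain ⟨s, rfl⟩ := Ideal.Quotient.mk_surjective r
    have h1 : piX n (Ideal.Quotient.mk (relIdeal n) s)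
        * piX n (Ideal.Quotient.mk (relIdeal n) q) = 0 := by
      rw [← map_mul, hr, map_zero]
    have h2 : piY n (Ideal.Quotient.mk (relIdeal n) s)
        * piY n (Ideal.Quotient.mk (relIdeal n) q) = 0 := by
      rw [← map_mul, hr, map_zero]
    have hxr : aeval (pxVals n) s = 0 := by
      rw [← piX_mk]
      exact (mul_eq_zero.mp h1).resolve_right hx
    have hyr : aeval (pyVals n) s = 0 := by
      rw [← piY_mk]
      exact (mul_eq_zero.mp h2).resolve_right hy
    have hsx : sx n s = 0 := by rw [sx_eq, hxr, map_zero]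
    have hsy : sy n s = 0 := by rw [sy_eq, hyr, map_zero]
    rw [Ideal.Quotient.eq_zero_iff_mem]
    exact mem_of_sx_sy_eq_zero hsx hsy
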